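/- At the bifurcation velocity v = 1/√2 (where u = √(3/2)): each of the matrices A(1/√2), B_ther(1/√2), B_velo(1/√2) has rank 1 and annihilates the vector r = (3, 2√3), i.e. A(1/√2)·r = B_ther(1/√2)·r = B_velo(1/√2)·r = 0; while B̃_visc(1/√2) = (3/4)·[[1, −√3],[−√3, 3]] has rank 1 with kernel spanned by (3, √3), which is not parallel to r. Consequently, for any η̃, μ, ν > 0, the matrix B(1/√2) = η̃·B̃_visc(1/√2) − μ·B_ther(1/√2) − ν·B_velo(1/√2) is invertible. -/

import Mathlib

open Real Matrix Filter Topology Set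

noncomputable section

/-- The state space condition `ψ⁰ > |ψ¹|`. -/
def StateSpace (ψ : Fin 2 → ℝ) : Prop := |ψ 1| < ψ 0

/-- Temperature variable `θ(ψ) = ((ψ⁰)² − (ψ¹)²)^(−1/2)`. -/
def θf (ψ : Fin 2 → ℝ) : ℝ := (Real.sqrt ((ψ 0) ^ 2 - (ψ 1) ^ 2))⁻¹

/-- `u(ψ) = θ(ψ) ψ⁰`. -/
def uf (ψ : Fin 2 → ℝ) : ℝ := θf ψ * ψ 0

/-- `v(ψ) = θ(ψ) ψ¹`. -/
def vf (ψ : Fin 2 → ℝ) : ℝ := θf ψ * ψ 1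

/-- Ideal stress component `T⁰¹`. -/
def T01 (ψ : Fin 2 → ℝ) : ℝ := (4 / 3) * (θf ψ) ^ 4 * uf ψ * vf ψ

/-- Ideal stress component `T¹¹`. -/
def T11 (ψ : Fin 2 → ℝ) : ℝ := (θf ψ) ^ 4 * ((4 / 3) * (vf ψ) ^ 2 + 1 / 3)

/-- `u = √(1+v²)` as a function of the velocity `v`. -/
def uu (v : ℝ) : ℝ := Real.sqrt (1 + v ^ 2)

/-- Viscosity matrix `B̃_visc(v)`. -/
def Bvisc (v : ℝ) : Matrix (Fin 2) (Fin 2) ℝ :=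
  !![(uu v) ^ 2 * v ^ 2, -((uu v) ^ 3 * v); -((uu v) ^ 3 * v), (uu v) ^ 4]

/-- Thermal regulator matrix `B_ther(v)`. -/
def Bther (v : ℝ) : Matrix (Fin 2) (Fin 2) ℝ :=
  !![16 * (uu v) ^ 2 * v ^ 2, -(4 * uu v * v * (4 * v ^ 2 + 1));
     -(4 * uu v * v * (4 * v ^ 2 + 1)), (4 * v ^ 2 + 1) ^ 2]

/-- Velocity regulator matrix `B_velo(v)`. -/
def Bvelo (v : ℝ) : Matrix (Fin 2) (Fin 2) ℝ :=
  !![((uu v) ^ 2 + v ^ 2) ^ 2, -(2 * ((uu v) ^ 2 + v ^ 2) * uu v * v);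
     -(2 * ((uu v) ^ 2 + v ^ 2) * uu v * v), 4 * (uu v) ^ 2 * v ^ 2]

/-- The full dissipation matrix `B(v) = η̃ B̃_visc − μ B_ther − ν B_velo`. -/
def Bmat (η μ ν v : ℝ) : Matrix (Fin 2) (Fin 2) ℝ :=
  η • Bvisc v - μ • Bther v - ν • Bvelo v

/-- The (rescaled) flux Jacobian `A(v)`. -/
def Amat (v : ℝ) : Matrix (Fin 2) (Fin 2) ℝ :=
  !![v * (6 * (uu v) ^ 2 - 1), -(uu v * (6 * v ^ 2 + 1));
     -(uu v * (6 * v ^ 2 + 1)), v * (6 * v ^ 2 + 3)]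

/-- Upstream velocity `v₋(q̃)`. -/
def vminus (q : ℝ) : ℝ :=
  Real.sqrt (((2 * q - 1) + Real.sqrt (q * (4 * q - 3))) / (4 * (1 - q)))

/-- Downstream velocity `v₊(q̃)`. -/
def vplus (q : ℝ) : ℝ :=
  Real.sqrt (((2 * q - 1) - Real.sqrt (q * (4 * q - 3))) / (4 * (1 - q)))

/-- The state `ψ` with velocity `v` on the Hugoniot curve `T¹¹ = 1`. -/
def psiOf (v : ℝ) : Fin 2 → ℝ :=
  ((4 / 3) * v ^ 2 + 1 / 3) ^ ((1 : ℝ) / 4) • ![Real.sqrt (1 + v ^ 2), v]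

/-- Upstream state `ψ₋(q̃)`. -/
def psiMinus (q : ℝ) : Fin 2 → ℝ := psiOf (vminus q)

/-- Downstream state `ψ₊(q̃)`. -/
def psiPlus (q : ℝ) : Fin 2 → ℝ := psiOf (vplus q)

/-- `ψ : ℝ → Ψ` is a C¹ solution of the profile ODE
`B(v(ψ))·ψ' = (T⁰¹(ψ) − q̃^(−1/2), T¹¹(ψ) − 1)`. -/
def ProfileSolution (η μ ν q : ℝ) (ψ : ℝ → Fin 2 → ℝ) : Prop :=
  ContDiff ℝ 1 ψ ∧ (∀ t, StateSpace (ψ t)) ∧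
  ∀ t, (Bmat η μ ν (vf (ψ t))).mulVec (deriv ψ t) =
    ![T01 (ψ t) - (Real.sqrt q)⁻¹, T11 (ψ t) - 1]

end


private lemma aux_rank_one (M : Matrix (Fin 2) (Fin 2) ℝ) (r : Fin 2 → ℝ) (hr : r ≠ 0)
    (hk : M.mulVec r = 0) (hM : M ≠ 0) : M.rank = 1 := by
  have hrank : M.rank = Module.finrank ℝ (LinearMap.range M.mulVecLin) := rfl
  have h := M.mulVecLin.finrank_range_add_finrank_ker
  have hcard : Module.finrank ℝ (Fin 2 → ℝ) = 2 := by simp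
  rw [hcard] at h
  have hker : 0 < Module.finrank ℝ (LinearMap.ker M.mulVecLin) := by
    rw [Module.finrank_pos_iff]
    exact ⟨⟨r, by simpa using hk⟩, 0, by simp [hr]⟩
  have hij : ∃ i j, M i j ≠ 0 := by
    by_contra hc; push_neg at hc
    exact hM (by ext i j; simpa using hc i j)
  obtain ⟨i, j, hij⟩ := hij
  have hrange : 0 < Module.finrank ℝ (LinearMap.range M.mulVecLin) := by
    rw [Module.finrank_pos_iff]
    refine ⟨⟨M.mulVec (Pi.single j 1), LinearMap.mem_range_self _ _⟩, 0, ?_⟩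
    simp only [ne_eq, Submodule.mk_eq_zero]
    intro hz
    have := congrFun (congrArg Subtype.val hz) i
    simp [Matrix.mulVec_single] at this
    exact hij this
  omega

/-- Structure of the matrices at the bifurcation point: `A`, `B_ther`, `B_velo` are
rank-one with common kernel vector `r = (3, 2√3)`, while `B̃_visc` is rank-one with
kernel spanned by `(3, √3)`, not parallel to `r`; consequently `B(1/√2)` is invertible
for all positive parameters. -/
theorem bifurcation_point_kernels :
    (Amat (Real.sqrt 2)⁻¹).rank = 1 ∧
    (Bther (Real.sqrt 2)⁻¹).rank = 1 ∧
    (Bvelo (Real.sqrt 2)⁻¹).rank = 1 ∧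
    (Amat (Real.sqrt 2)⁻¹).mulVec ![3, 2 * Real.sqrt 3] = 0 ∧
    (Bther (Real.sqrt 2)⁻¹).mulVec ![3, 2 * Real.sqrt 3] = 0 ∧
    (Bvelo (Real.sqrt 2)⁻¹).mulVec ![3, 2 * Real.sqrt 3] = 0 ∧
    Bvisc (Real.sqrt 2)⁻¹ = (3 / 4 : ℝ) • !![1, -Real.sqrt 3; -Real.sqrt 3, 3] ∧
    (Bvisc (Real.sqrt 2)⁻¹).rank = 1 ∧
    (∀ x : Fin 2 → ℝ, (Bvisc (Real.sqrt 2)⁻¹).mulVec x = 0 ↔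
      ∃ c : ℝ, x = c • ![3, Real.sqrt 3]) ∧
    (¬ ∃ c : ℝ, (![3, Real.sqrt 3] : Fin 2 → ℝ) = c • ![3, 2 * Real.sqrt 3]) ∧
    (∀ η μ ν : ℝ, 0 < η → 0 < μ → 0 < ν →
      IsUnit (Bmat η μ ν (Real.sqrt 2)⁻¹).det) := by
  set s := Real.sqrt 3 with hsdef
  set w := (Real.sqrt 2)⁻¹ with hwdef
  have hs : s ^ 2 = 3 := Real.sq_sqrt (by norm_num)
  have hspos : 0 < s := Real.sqrt_pos.mpr (by norm_num)
  have hwpos : 0 < w := by positivity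
  have hw : w ^ 2 = 1 / 2 := by
    rw [hwdef, inv_pow, Real.sq_sqrt] <;> norm_num
  have hw4 : w ^ 4 = 1 / 4 := by linear_combination (w ^ 2 + 1 / 2) * hw
  have hu : uu w = s * w := by
    rw [uu, hw, hsdef, hwdef, ← Real.sqrt_inv, ← Real.sqrt_mul (by norm_num : (0:ℝ) ≤ 3)]
    norm_num
  have eV : Bvisc w = !![3 / 4, -(3 / 4 * s); -(3 / 4 * s), 9 / 4] := by
    rw [Bvisc, hu]
    ext i j
    fin_cases i <;> fin_cases j <;> simp
    · linear_combination w ^ 4 * hs + 3 * hw4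
    · linear_combination (s * w ^ 4) * hs + 3 * s * hw4
    · linear_combination (s * w ^ 4) * hs + 3 * s * hw4
    · linear_combination (w ^ 4 * (s ^ 2 + 3)) * hs + 9 * hw4
  have eT : Bther w = !![12, -(6 * s); -(6 * s), 9] := by
    rw [Bther, hu]
    ext i j
    fin_cases i <;> fin_cases j <;> simp
    · linear_combination 16 * w ^ 4 * hs + 48 * hw4
    · linear_combination (16 * s) * hw4 + (4 * s) * hw
    · linear_combination (16 * s) * hw4 + (4 * s) * hw
    · linear_combination 16 * hw4 + 8 * hw
  have eW : Bvelo w = !![4, -(2 * s); -(2 * s), 3] := by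
    rw [Bvelo, hu]
    ext i j
    fin_cases i <;> fin_cases j <;> simp
    · linear_combination (w ^ 4 * (s ^ 2 + 5)) * hs + 16 * hw4
    · linear_combination (2 * s * w ^ 4) * hs + (8 * s) * hw4
    · linear_combination (2 * s * w ^ 4) * hs + (8 * s) * hw4
    · linear_combination 4 * w ^ 4 * hs + 12 * hw4
  have eA : Amat w = !![8 * w, -(4 * s * w); -(4 * s * w), 6 * w] := by
    rw [Amat, hu]
    ext i j
    fin_cases i <;> fin_cases j <;> simp
    · linear_combination 6 * w ^ 3 * hs + 18 * w * hw
    · linear_combination (6 * s * w) * hw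
    · linear_combination (6 * s * w) * hw
    · linear_combination 6 * w * hw
  have hr3 : (![3, 2 * s] : Fin 2 → ℝ) ≠ 0 := by
    intro hc; have := congrFun hc 0; norm_num at this
  have mA : (Amat w).mulVec ![3, 2 * s] = 0 := by
    rw [eA]; funext i; fin_cases i <;>
      simp [Matrix.mulVec, dotProduct, Fin.sum_univ_two]
    · linear_combination (-8 * w) * hs
    · linear_combination (0 : ℝ) * hs
  have mT : (Bther w).mulVec ![3, 2 * s] = 0 := by
    rw [eT]; funext i; fin_cases i <;>
      simp [Matrix.mulVec, dotProduct, Fin.sum_univ_two]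
    · linear_combination (-12 : ℝ) * hs
    · linear_combination (0 : ℝ) * hs
  have mW : (Bvelo w).mulVec ![3, 2 * s] = 0 := by
    rw [eW]; funext i; fin_cases i <;>
      simp [Matrix.mulVec, dotProduct, Fin.sum_univ_two]
    · linear_combination (-4 : ℝ) * hs
    · linear_combination (0 : ℝ) * hs
  refine ⟨?_, ?_, ?_, mA, mT, mW, ?_, ?_, ?_, ?_, ?_⟩
  · refine aux_rank_one _ _ hr3 mA ?_
    intro hc
    have := congrFun (congrFun hc 0) 1
    rw [eA] at this
    simp at this
    rcases this with h | h
    · exact absurd h (ne_of_gt hspos)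
    · exact absurd h (ne_of_gt hwpos)
  · refine aux_rank_one _ _ hr3 mT ?_
    intro hc
    have := congrFun (congrFun hc 0) 0
    rw [eT] at this; norm_num at this
  · refine aux_rank_one _ _ hr3 mW ?_
    intro hc
    have := congrFun (congrFun hc 0) 0
    rw [eW] at this; norm_num at this
  · rw [eV]
    ext i j
    fin_cases i <;> fin_cases j <;> simp [Matrix.smul_apply] <;> ring
  · refine aux_rank_one _ ![3, s] ?_ ?_ ?_
    · intro hc; have := congrFun hc 0; norm_num at this
    · rw [eV]; funext i; fin_cases i <;>
        simp [Matrix.mulVec, dotProduct, Fin.sum_univ_two]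
      · linear_combination (-3 / 4 : ℝ) * hs
      · ring
    · intro hc
      have := congrFun (congrFun hc 0) 0
      rw [eV] at this; norm_num at this
  · intro x
    constructor
    · intro hx
      rw [eV] at hx
      have h0 := congrFun hx 0
      simp [Matrix.mulVec, dotProduct, Fin.sum_univ_two] at h0
      refine ⟨s * x 1 / 3, ?_⟩
      funext i
      fin_cases i <;> simp
      · linarith
      · field_simp
        linear_combination (-(x 1)) * hs
    · rintro ⟨c, rfl⟩
      rw [eV]; funext i; fin_cases i <;>
        simp [Matrix.mulVec, dotProduct, Fin.sum_univ_two]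
      · linear_combination (-3 / 4 * c : ℝ) * hs
      · ring
  · rintro ⟨c, hc⟩
    have h0 := congrFun hc 0
    have h1 := congrFun hc 1
    simp at h0 h1
    rw [h0, one_mul] at h1
    linarith
  · intro η μ ν hη hμ hν
    have hdet : (Bmat η μ ν w).det = -(9 / 4) * η * (3 * μ + ν) := by
      rw [Bmat, eV, eT, eW]
      rw [show (η • !![3 / 4, -(3 / 4 * s); -(3 / 4 * s), 9 / 4] -
          μ • !![12, -(6 * s); -(6 * s), 9] - ν • !![4, -(2 * s); -(2 * s), 3] :
          Matrix (Fin 2) (Fin 2) ℝ) =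
          !![3 / 4 * η - 12 * μ - 4 * ν, s * (-(3 / 4 * η) + 6 * μ + 2 * ν);
             s * (-(3 / 4 * η) + 6 * μ + 2 * ν), 9 / 4 * η - 9 * μ - 3 * ν] from by
        ext i j; fin_cases i <;> fin_cases j <;>
          simp [Matrix.smul_apply, Matrix.sub_apply] <;> ring]
      rw [Matrix.det_fin_two_of]
      linear_combination (-((-(3 / 4 * η) + 6 * μ + 2 * ν)) ^ 2) * hs
    rw [hdet]
    refine isUnit_iff_ne_zero.mpr ?_
    have : 0 < (9 / 4) * η * (3 * μ + ν) := by positivity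
    intro hz; nlinarith
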